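/- Let G be a connected graph and let (T, 𝒳) be a tree-cut decomposition of G of finite adhesion whose parts are precisely the ω-edge blocks of G and such that for every edge t₁t₂ of T there is an edge of G between X_{t₁} and X_{t₂}. Then for every region C of G there exist finitely many pairwise disjoint regions C'_1, …, C'_n of T such that the vertex set of C equals ⋃_{i=1}^{n} ⋃_{t ∈ C'_i} X_t. -/
import Mathlib


/-- The set of edges of `G` with one endpoint in `A` and the other in `B`. -/
def edgesBetween {V : Type*} (G : SimpleGraph V) (A B : Set V) : Set (Sym2 V) :=
  {e | e ∈ G.edgeSet ∧ ∃ x ∈ A, ∃ y ∈ B, e = s(x, y)}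

/-- `x ~ y` iff no finite set of edges of `G` separates `x` from `y`. -/
def OmegaEquiv {V : Type*} (G : SimpleGraph V) (x y : V) : Prop :=
  ∀ F : Set (Sym2 V), F.Finite → (G.deleteEdges F).Reachable x y

/-- The ω-edge blocks of `G` are the equivalence classes of `OmegaEquiv`. -/
def IsOmegaEdgeBlock {V : Type*} (G : SimpleGraph V) (B : Set V) : Prop :=
  ∃ x, B = {y | OmegaEquiv G x y}

/-- Given a tree-cut decomposition `(T, X)` and an edge `t₁t₂` of `T`, the union of the parts
indexed by the component of `T - t₁t₂` containing `t₁`. -/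
def side {τ V : Type*} (T : SimpleGraph τ) (X : τ → Set V) (t₁ t₂ : τ) : Set V :=
  ⋃ t ∈ {u | (T.deleteEdges {s(t₁, t₂)}).Reachable t₁ u}, X t

/-- A region of `G` is (the vertex set of) a connected subgraph with finite edge boundary. -/
def IsRegion {V : Type*} (G : SimpleGraph V) (C : Set V) : Prop :=
  (G.induce C).Connected ∧ (edgesBetween G C Cᶜ).Finite

namespace RegionAux

variable {V : Type*} {G : SimpleGraph V}

lemma omega_refl (G : SimpleGraph V) (x : V) : OmegaEquiv G x x :=
  fun _ _ => SimpleGraph.Reachable.refl x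

lemma omega_symm {x y : V} (h : OmegaEquiv G x y) : OmegaEquiv G y x :=
  fun F hF => (h F hF).symm

lemma omega_trans {x y z : V} (h : OmegaEquiv G x y) (h' : OmegaEquiv G y z) :
    OmegaEquiv G x z := fun F hF => (h F hF).trans (h' F hF)

lemma block_eq {B B' : Set V} (hB : IsOmegaEdgeBlock G B) (hB' : IsOmegaEdgeBlock G B')
    (h : (B ∩ B').Nonempty) : B = B' := by
  obtain ⟨a, rfl⟩ := hB; obtain ⟨b, rfl⟩ := hB'
  obtain ⟨x, hx, hx'⟩ := h
  simp only [Set.mem_setOf_eq] at hx hx'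
  ext y
  simp only [Set.mem_setOf_eq]
  exact ⟨fun h => omega_trans hx' (omega_trans (omega_symm hx) h),
         fun h => omega_trans hx (omega_trans (omega_symm hx') h)⟩

lemma cross {W : Type*} (H : SimpleGraph W) (C : Set W) :
    ∀ {x y : W}, H.Walk x y → x ∈ C → y ∉ C → ∃ a b, H.Adj a b ∧ a ∈ C ∧ b ∉ C := by
  intro x y w
  induction w with
  | nil => intro hx hy; exact absurd hx hy
  | @cons a b c h p ih =>
    intro hx hy
    by_cases hb : b ∈ C
    · exact ih hb hy
    · exact ⟨a, b, h, hx, hb⟩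

lemma block_stays {C : Set V} (hC : IsRegion G C) {B : Set V} (hB : IsOmegaEdgeBlock G B)
    {x y : V} (hxB : x ∈ B) (hxC : x ∈ C) (hyB : y ∈ B) : y ∈ C := by
  by_contra hyC
  obtain ⟨a, rfl⟩ := hB
  have hxy : OmegaEquiv G x y := omega_trans (omega_symm hxB) hyB
  obtain ⟨w⟩ := hxy (edgesBetween G C Cᶜ) hC.2
  obtain ⟨a, b, hab, haC, hbC⟩ := cross _ C w hxC hyC
  rw [SimpleGraph.deleteEdges_adj] at hab
  exact hab.2 ⟨G.mem_edgeSet.mpr hab.1, a, haC, b, hbC, rfl⟩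

lemma reach_induce {W : Type*} (H : SimpleGraph W) (A : Set W) :
    ∀ {u v : W}, (w : H.Walk u v) → (∀ z ∈ w.support, z ∈ A) →
      ∀ (hu : u ∈ A) (hv : v ∈ A), (H.induce A).Reachable ⟨u, hu⟩ ⟨v, hv⟩ := by
  intro u v w
  induction w with
  | nil => intro _ hu hv; rfl
  | @cons a b c h p ih =>
    intro hs hu hv
    have hb : b ∈ A := hs b (by simp)
    have h1 : (H.induce A).Adj ⟨a, hu⟩ ⟨b, hb⟩ := h
    exact h1.reachable.trans (ih (fun z hz => hs z (by simp [hz])) hb hv)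

end RegionAux

open RegionAux in
/-- For a tree-cut decomposition of finite adhesion into the ω-edge blocks, with adjacent
parts joined by edges, every region of `G` is the union of the parts over finitely many
pairwise disjoint regions of the decomposition tree. -/
theorem region_decomposes_into_tree_regions {V τ : Type*} (G : SimpleGraph V)
    (hG : G.Connected)
    (T : SimpleGraph τ) (hT : T.IsTree) (X : τ → Set V)
    (hblocks : ∀ t, IsOmegaEdgeBlock G (X t))
    (hinj : Function.Injective X)
    (hsurj : ∀ B : Set V, IsOmegaEdgeBlock G B → ∃ t, X t = B)
    (hadhesion : ∀ t₁ t₂, T.Adj t₁ t₂ →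
      (edgesBetween G (side T X t₁ t₂) (side T X t₂ t₁)).Finite)
    (hedge : ∀ t₁ t₂, T.Adj t₁ t₂ → ∃ x ∈ X t₁, ∃ y ∈ X t₂, G.Adj x y)
    (C : Set V) (hC : IsRegion G C) :
    ∃ (n : ℕ) (C' : Fin n → Set τ),
      (∀ i, IsRegion T (C' i)) ∧
      (∀ i j, i ≠ j → Disjoint (C' i) (C' j)) ∧
      C = ⋃ i, ⋃ t ∈ C' i, X t := by
  classical
  set S : Set τ := {t | (X t ∩ C).Nonempty} with hSdef
  have hsubC : ∀ t ∈ S, X t ⊆ C := by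
    rintro t ⟨x, hxX, hxC⟩ y hy
    exact block_stays hC (hblocks t) hxX hxC hy
  have hnotS : ∀ t, t ∉ S → ∀ x ∈ X t, x ∉ C := by
    intro t ht x hx hxC
    exact ht ⟨x, hx, hxC⟩
  have hCeq : C = ⋃ t ∈ S, X t := by
    ext x
    constructor
    · intro hx
      obtain ⟨t, ht⟩ := hsurj {y | OmegaEquiv G x y} ⟨x, rfl⟩
      have hxt : x ∈ X t := by rw [ht]; exact omega_refl G x
      exact Set.mem_biUnion ⟨x, hxt, hx⟩ hxt
    · intro hx
      obtain ⟨t, htS, hxt⟩ := Set.mem_iUnion₂.mp hx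
      exact hsubC t htS hxt
  -- the boundary of S in T is finite
  set D : Set (Sym2 τ) := edgesBetween T S Sᶜ with hDdef
  have hDfin : D.Finite := by
    rw [← Set.finite_coe_iff]
    have hchoice : ∀ e : D, ∃ p : V × V,
        p.1 ∈ C ∧ p.2 ∉ C ∧ s(p.1, p.2) ∈ edgesBetween G C Cᶜ ∧
        ∃ t₁ t₂, (e : Sym2 τ) = s(t₁, t₂) ∧ p.1 ∈ X t₁ ∧ p.2 ∈ X t₂ := by
      rintro ⟨e, heE, t₁, ht₁, t₂, ht₂, he⟩
      have hadj : T.Adj t₁ t₂ := T.mem_edgeSet.mp (he ▸ heE)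
      obtain ⟨x, hx, y, hy, hxy⟩ := hedge t₁ t₂ hadj
      have hxC : x ∈ C := hsubC t₁ ht₁ hx
      have hyC : y ∉ C := hnotS t₂ ht₂ y hy
      exact ⟨(x, y), hxC, hyC, ⟨G.mem_edgeSet.mpr hxy, x, hxC, y, hyC, rfl⟩,
        t₁, t₂, he, hx, hy⟩
    choose p hp1 hp2 hp3 hp4 using hchoice
    have : Finite ↥(edgesBetween G C Cᶜ) := hC.2.to_subtype
    refine Finite.of_injective (fun e => (⟨s((p e).1, (p e).2), hp3 e⟩ :
      ↥(edgesBetween G C Cᶜ))) ?_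
    intro e e' hee
    have h := Subtype.ext_iff.mp hee
    rw [Sym2.eq_iff] at h
    have hxy : (p e).1 = (p e').1 ∧ (p e).2 = (p e').2 := by
      rcases h with h | h
      · exact h
      · exact absurd (h.1 ▸ hp1 e) (hp2 e')
    obtain ⟨t₁, t₂, he, hx, hy⟩ := hp4 e
    obtain ⟨t₁', t₂', he', hx', hy'⟩ := hp4 e'
    have hx'' : (p e).1 ∈ X t₁' := by rw [hxy.1]; exact hx'
    have hy'' : (p e).2 ∈ X t₂' := by rw [hxy.2]; exact hy'
    have h1 : t₁ = t₁' := hinj (block_eq (hblocks t₁) (hblocks t₁') ⟨(p e).1, hx, hx''⟩)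
    have h2 : t₂ = t₂' := hinj (block_eq (hblocks t₂) (hblocks t₂') ⟨(p e).2, hy, hy''⟩)
    apply Subtype.ext
    rw [he, he', h1, h2]
  -- components of T restricted to S
  set K : τ → Set τ := fun t => {u | ∃ w : T.Walk t u, ∀ z ∈ w.support, z ∈ S}
    with hKdef
  have hKself : ∀ t ∈ S, t ∈ K t := by
    intro t ht
    exact ⟨SimpleGraph.Walk.nil, by simp [ht]⟩
  have hKsub : ∀ t, K t ⊆ S := by
    rintro t u ⟨w, hw⟩
    exact hw u w.end_mem_support
  have hKtrans : ∀ {t u v : τ}, u ∈ K t → v ∈ K u → v ∈ K t := by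
    rintro t u v ⟨w, hw⟩ ⟨w', hw'⟩
    refine ⟨w.append w', fun z hz => ?_⟩
    rcases (SimpleGraph.Walk.mem_support_append_iff _ _).mp hz with h | h
    · exact hw z h
    · exact hw' z h
  have hKsymm : ∀ {t u : τ}, u ∈ K t → t ∈ K u := by
    rintro t u ⟨w, hw⟩
    refine ⟨w.reverse, fun z hz => hw z ?_⟩
    rwa [SimpleGraph.Walk.support_reverse, List.mem_reverse] at hz
  have hKeq : ∀ {t u : τ}, u ∈ K t → K t = K u := by
    intro t u hu
    ext v
    exact ⟨fun hv => hKtrans (hKsymm hu) hv, fun hv => hKtrans hu hv⟩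
  have hstep : ∀ t a b, a ∈ K t → T.Adj a b → b ∈ S → b ∈ K t := by
    rintro t a b ⟨w, hw⟩ hadj hbS
    refine ⟨w.append hadj.toWalk, fun z hz => ?_⟩
    rcases (SimpleGraph.Walk.mem_support_append_iff _ _).mp hz with h | h
    · exact hw z h
    · simp only [SimpleGraph.Adj.toWalk, SimpleGraph.Walk.support_cons,
        SimpleGraph.Walk.support_nil, List.mem_cons, List.mem_singleton] at h
      rcases h with h | h | h
      · exact h ▸ hw a w.end_mem_support
      · exact h ▸ hbS
      · exact absurd h (by simp)
  -- each K t is a region of T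
  have hbdK : ∀ t, edgesBetween T (K t) (K t)ᶜ ⊆ D := by
    rintro t e ⟨heE, a, ha, b, hb, he⟩
    have hadj : T.Adj a b := T.mem_edgeSet.mp (he ▸ heE)
    have hbS : b ∉ S := fun hbS => hb (hstep t a b ha hadj hbS)
    exact ⟨heE, a, hKsub t ha, b, hbS, he⟩
  have hKregion : ∀ t ∈ S, IsRegion T (K t) := by
    intro t ht
    constructor
    · rw [SimpleGraph.connected_iff]
      refine ⟨?_, ⟨⟨t, hKself t ht⟩⟩⟩
      rintro ⟨u, hu⟩ ⟨v, hv⟩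
      obtain ⟨w1, hw1⟩ := hu
      obtain ⟨w2, hw2⟩ := hv
      have hmem : ∀ z ∈ (w1.reverse.append w2).support, z ∈ K t := by
        intro z hz
        rcases (SimpleGraph.Walk.mem_support_append_iff _ _).mp hz with h | h
        · rw [SimpleGraph.Walk.support_reverse, List.mem_reverse] at h
          exact ⟨w1.takeUntil z h, fun y hy =>
            hw1 y (SimpleGraph.Walk.support_takeUntil_subset _ h hy)⟩
        · exact ⟨w2.takeUntil z h, fun y hy =>
            hw2 y (SimpleGraph.Walk.support_takeUntil_subset _ h hy)⟩
      exact reach_induce T (K t) (w1.reverse.append w2) hmem _ _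
    · exact hDfin.subset (hbdK t)
  -- the set of components is finite
  set 𝒦 : Set (Set τ) := {A | ∃ t ∈ S, A = K t} with h𝒦def
  have h𝒦sub : ∀ A ∈ 𝒦, A ⊆ S := by
    rintro A ⟨t, ht, rfl⟩
    exact hKsub t
  have h𝒦fin : 𝒦.Finite := by
    by_cases huniv : ∃ t ∈ S, K t = Set.univ
    · obtain ⟨t₀, ht₀, hK₀⟩ := huniv
      refine (Set.finite_singleton (Set.univ : Set τ)).subset ?_
      rintro A ⟨t, ht, rfl⟩
      have htK : t ∈ K t₀ := hK₀ ▸ Set.mem_univ t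
      rw [Set.mem_singleton_iff, ← hKeq htK, hK₀]
    · push_neg at huniv
      rw [← Set.finite_coe_iff]
      have hchoice : ∀ A : ↥𝒦, ∃ p : τ × τ,
          p.1 ∈ (A : Set τ) ∧ p.2 ∉ S ∧ s(p.1, p.2) ∈ D := by
        rintro ⟨A, hA⟩
        obtain ⟨t, ht, rfl⟩ := hA
        have hne : K t ≠ Set.univ := huniv t ht
        obtain ⟨u, hu⟩ : ∃ u, u ∉ K t := by
          by_contra h
          push_neg at h
          exact hne (Set.eq_univ_of_forall h)
        obtain ⟨w⟩ := hT.isConnected.preconnected t u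
        obtain ⟨a, b, hab, haK, hbK⟩ := cross T (K t) w (hKself t ht) hu
        have hbS : b ∉ S := fun hbS => hbK (hstep t a b haK hab hbS)
        exact ⟨(a, b), haK, hbS, hbdK t ⟨T.mem_edgeSet.mpr hab, a, haK, b, hbK, rfl⟩⟩
      choose p hp1 hp2 hp3 using hchoice
      have : Finite ↥D := hDfin.to_subtype
      refine Finite.of_injective (fun A => (⟨s((p A).1, (p A).2), hp3 A⟩ : ↥D)) ?_
      intro A A' hAA
      have h := Subtype.ext_iff.mp hAA
      rw [Sym2.eq_iff] at h
      have hfst : (p A).1 = (p A').1 := by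
        rcases h with h | h
        · exact h.1
        · exact absurd (h.1 ▸ (h𝒦sub _ A.2 (hp1 A))) (hp2 A')
      obtain ⟨t, ht, hAK⟩ := A.2
      obtain ⟨t', ht', hAK'⟩ := A'.2
      have h1 : (p A).1 ∈ K t := hAK ▸ hp1 A
      have h2 : (p A).1 ∈ K t' := by
        rw [← hAK']
        rw [hfst]
        exact hp1 A'
      apply Subtype.ext
      show (A : Set τ) = (A' : Set τ)
      rw [hAK, hAK', hKeq h1, hKeq h2]
  -- assemble
  let e := h𝒦fin.toFinset.equivFin
  refine ⟨h𝒦fin.toFinset.card, fun i => ((e.symm i : ↥h𝒦fin.toFinset) : Set τ), ?_, ?_, ?_⟩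
  · intro i
    have hmem : ((e.symm i : ↥h𝒦fin.toFinset) : Set τ) ∈ 𝒦 :=
      (Set.Finite.mem_toFinset h𝒦fin).mp (e.symm i).2
    obtain ⟨t, ht, hAK⟩ := hmem
    show IsRegion T ((e.symm i : ↥h𝒦fin.toFinset) : Set τ)
    rw [hAK]
    exact hKregion t ht
  · intro i j hij
    have hmemi : ((e.symm i : ↥h𝒦fin.toFinset) : Set τ) ∈ 𝒦 :=
      (Set.Finite.mem_toFinset h𝒦fin).mp (e.symm i).2
    have hmemj : ((e.symm j : ↥h𝒦fin.toFinset) : Set τ) ∈ 𝒦 :=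
      (Set.Finite.mem_toFinset h𝒦fin).mp (e.symm j).2
    obtain ⟨t, ht, hAK⟩ := hmemi
    obtain ⟨t', ht', hAK'⟩ := hmemj
    show Disjoint ((e.symm i : ↥h𝒦fin.toFinset) : Set τ) ((e.symm j : ↥h𝒦fin.toFinset) : Set τ)
    rw [hAK, hAK']
    by_contra hdis
    obtain ⟨u, hu1, hu2⟩ := Set.not_disjoint_iff.mp hdis
    have : ((e.symm i : ↥h𝒦fin.toFinset) : Set τ) = ((e.symm j : ↥h𝒦fin.toFinset) : Set τ) := by
      rw [hAK, hAK', hKeq hu1, hKeq hu2]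
    exact hij (e.symm.injective (Subtype.ext this))
  · rw [hCeq]
    ext x
    simp only [Set.mem_iUnion]
    constructor
    · rintro ⟨t, ht, hx⟩
      have hKt𝒦 : K t ∈ h𝒦fin.toFinset :=
        (Set.Finite.mem_toFinset h𝒦fin).mpr ⟨t, ht, rfl⟩
      refine ⟨e ⟨K t, hKt𝒦⟩, t, ?_, hx⟩
      rw [Equiv.symm_apply_apply]
      exact hKself t ht
    · rintro ⟨i, t, htK, hx⟩
      have hmem : ((e.symm i : ↥h𝒦fin.toFinset) : Set τ) ∈ 𝒦 :=
        (Set.Finite.mem_toFinset h𝒦fin).mp (e.symm i).2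
      exact ⟨t, h𝒦sub _ hmem htK, hx⟩
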